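/- The symplectic group Sp_{2r}(F) over a field F of characteristic 0 is generated by its Siegel parabolic subgroup P(F) = { block matrices [[A,B],[0,D]] in Sp_{2r}(F) } together with the single element w₁, where w₁ is the image of [[0,-1],[1,0]] under the standard embedding SL₂ ↪ Sp_{2r} into the first coordinate. -/

import Mathlib

open Matrix

namespace SpGenAux

variable {F : Type*} [Field F] {r : ℕ} [NeZero r]

local notation "Mr" => Matrix (Fin r) (Fin r) F
local notation "M2" => Matrix (Fin r ⊕ Fin r) (Fin r ⊕ Fin r) F

/-- outer product times matrix -/
lemma outer_single_mul (u : Fin r → F) (M : Mr) (a b : Fin r) :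
    (vecMulVec u (Pi.single (0:Fin r) (1:F)) * M) a b = u a * M 0 b := by
  rw [mul_apply]
  simp [vecMulVec_apply, Pi.single_apply, ite_mul, mul_assoc]

lemma mul_single_outer (v : Fin r → F) (M : Mr) (a b : Fin r) :
    (M * vecMulVec (Pi.single (0:Fin r) (1:F)) v) a b = M a 0 * v b := by
  rw [mul_apply]
  simp [vecMulVec_apply, Pi.single_apply, mul_ite, ← mul_assoc]

end SpGenAux
namespace T
variable {F : Type*} [Field F] {r : ℕ} [NeZero r]

local notation "Mr" => Matrix (Fin r) (Fin r) F
local notation "M2" => Matrix (Fin r ⊕ Fin r) (Fin r ⊕ Fin r) F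

open SpGenAux

/-- unit from a square-zero matrix -/
def nilpU (N : Mr) (hN : N * N = 0) : (Mr)ˣ where
  val := 1 - N
  inv := 1 + N
  val_inv := by rw [mul_add, sub_mul, sub_mul, one_mul, one_mul, mul_one, hN, sub_zero]; abel
  inv_val := by rw [add_mul, mul_sub, mul_sub, one_mul, one_mul, mul_one, hN, sub_zero]; abel

lemma outer_single_sq (u : Fin r → F) (hu : u 0 = 0) :
    (vecMulVec u (Pi.single (0:Fin r) (1:F))) * (vecMulVec u (Pi.single (0:Fin r) (1:F))) = 0 := by
  ext a b
  rw [outer_single_mul]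
  simp [vecMulVec_apply, hu]

lemma single_outer_sq (v : Fin r → F) (hv : v 0 = 0) :
    (vecMulVec (Pi.single (0:Fin r) (1:F)) v) * (vecMulVec (Pi.single (0:Fin r) (1:F)) v) = 0 := by
  ext a b
  rw [mul_single_outer]
  simp [vecMulVec_apply, hv]

def permU (σ : Equiv.Perm (Fin r)) : (Mr)ˣ where
  val := σ.toPEquiv.toMatrix
  inv := σ.symm.toPEquiv.toMatrix
  val_inv := by
    rw [← PEquiv.toMatrix_trans, ← Equiv.toPEquiv_trans, Equiv.self_trans_symm,
      Equiv.toPEquiv_refl, PEquiv.toMatrix_refl]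
  inv_val := by
    rw [← PEquiv.toMatrix_trans, ← Equiv.toPEquiv_trans, Equiv.symm_trans_self,
      Equiv.toPEquiv_refl, PEquiv.toMatrix_refl]

def diagU (d : Fin r → F) (hd : ∀ i, d i ≠ 0) : (Mr)ˣ where
  val := diagonal d
  inv := diagonal fun i => (d i)⁻¹
  val_inv := by
    rw [diagonal_mul_diagonal]
    convert diagonal_one
    exact mul_inv_cancel₀ (hd _)
  inv_val := by
    rw [diagonal_mul_diagonal]
    convert diagonal_one
    exact inv_mul_cancel₀ (hd _)

/-- Normalization: any nonzero matrix can be turned by invertible left/right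
multiplication into one whose first row and column are `e₀`. -/
lemma exists_normalize (C : Mr) (hC : C ≠ 0) :
    ∃ E Fm : (Mr)ˣ, (∀ b, ((E : Mr) * C * (Fm : Mr)) 0 b = if b = 0 then 1 else 0) ∧
      (∀ a, ((E : Mr) * C * (Fm : Mr)) a 0 = if a = 0 then 1 else 0) := by
  -- pick a nonzero entry
  have : ∃ i j, C i j ≠ 0 := by
    by_contra h
    push_neg at h
    exact hC (by ext i j; simpa using h i j)
  obtain ⟨i, j, hij⟩ := this
  set σ : Equiv.Perm (Fin r) := Equiv.swap 0 i with hσ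
  set τ : Equiv.Perm (Fin r) := Equiv.swap 0 j with hτ
  -- step 1 : permute
  set M₁ : Mr := ((permU σ : (Mr)ˣ) : Mr) * C * ((permU τ : (Mr)ˣ) : Mr) with hM₁
  have hM₁e : ∀ a b, M₁ a b = C (σ a) (τ b) := by
    intro a b
    have : M₁ = (C.submatrix σ id).submatrix id τ.symm := by
      rw [hM₁]
      show σ.toPEquiv.toMatrix * C * τ.toPEquiv.toMatrix = _
      rw [PEquiv.toMatrix_toPEquiv_mul, PEquiv.mul_toMatrix_toPEquiv]
    rw [this]
    simp [Equiv.symm_swap, hτ]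
  have hM₁00 : M₁ 0 0 = C i j := by rw [hM₁e]; simp [hσ, hτ]
  -- step 2 : scale
  set d : Fin r → F := fun k => if k = 0 then (C i j)⁻¹ else 1 with hd
  have hd0 : ∀ k, d k ≠ 0 := by
    intro k
    rw [hd]
    dsimp only
    split
    · exact inv_ne_zero hij
    · exact one_ne_zero
  set M₂ : Mr := ((diagU d hd0 : (Mr)ˣ) : Mr) * M₁ with hM₂
  have hM₂e : ∀ a b, M₂ a b = d a * M₁ a b := by
    intro a b; rw [hM₂]; show (diagonal d * M₁) a b = _; rw [diagonal_mul]
  have hM₂00 : M₂ 0 0 = 1 := by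
    rw [hM₂e, hM₁00, hd]; simp [inv_mul_cancel₀ hij]
  -- step 3 : clear the first column
  set u : Fin r → F := fun k => if k = 0 then 0 else M₂ k 0 with hu
  set L : (Mr)ˣ := nilpU _ (outer_single_sq u (by rw [hu]; simp)) with hL
  have hLc : (L : Mr) = 1 - vecMulVec u (Pi.single (0:Fin r) (1:F)) := rfl
  set M₃ : Mr := (L : Mr) * M₂ with hM₃
  have hM₃e : ∀ a b, M₃ a b = M₂ a b - u a * M₂ 0 b := by
    intro a b
    rw [hM₃, hLc, sub_mul, one_mul, Matrix.sub_apply, outer_single_mul]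
  have hM₃col : ∀ a, M₃ a 0 = if a = 0 then 1 else 0 := by
    intro a
    rw [hM₃e, hu, hM₂00]
    by_cases ha : a = 0 <;> simp [ha, hM₂00]
  have hM₃row : ∀ b, M₃ 0 b = M₂ 0 b := by
    intro b; rw [hM₃e, hu]; simp
  -- step 4 : clear the first row
  set v : Fin r → F := fun k => if k = 0 then 0 else M₃ 0 k with hv
  set R : (Mr)ˣ := nilpU _ (single_outer_sq v (by rw [hv]; simp)) with hR
  have hRc : (R : Mr) = 1 - vecMulVec (Pi.single (0:Fin r) (1:F)) v := rfl
  set M₄ : Mr := M₃ * (R : Mr) with hM₄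
  have hM₄e : ∀ a b, M₄ a b = M₃ a b - M₃ a 0 * v b := by
    intro a b
    rw [hM₄, hRc, mul_sub, mul_one, Matrix.sub_apply, mul_single_outer]
  refine ⟨L * diagU d hd0 * permU σ, permU τ * R, ?_, ?_⟩
  all_goals
    have he : ((L * diagU d hd0 * permU σ : (Mr)ˣ) : Mr) * C * ((permU τ * R : (Mr)ˣ) : Mr)
        = M₄ := by
      rw [hM₄, hM₃, hM₂, hM₁]
      simp only [Units.val_mul]
      noncomm_ring
  · intro b
    rw [he, hM₄e, hM₃row, hv]
    by_cases hb : b = 0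
    · simp [hb, hM₃col 0, hM₂00]
    · simp [hb, hM₃col 0, hM₃row]
  · intro a
    rw [he, hM₄e, hM₃col, hv]
    simp

set_option linter.unusedSectionVars false

/-- the symplectic form matrix -/
def Jm : M2 := fromBlocks 0 (-1) 1 0

def Symp (g : M2) : Prop := gᵀ * (Jm (F:=F) (r:=r)) * g = Jm

lemma symp_mul {a b : M2} (ha : Symp a) (hb : Symp b) : Symp (a * b) := by
  unfold Symp at *
  have h : (a * b)ᵀ * Jm * (a * b) = bᵀ * (aᵀ * Jm * a) * b := by
    rw [transpose_mul]; noncomm_ring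
  rw [h, ha, hb]

lemma units_mul_inv (g : (Mr)ˣ) : (g : Mr) * ((g⁻¹ : (Mr)ˣ) : Mr) = 1 := by
  rw [← Units.val_mul, mul_inv_cancel, Units.val_one]

lemma units_inv_mul (g : (Mr)ˣ) : ((g⁻¹ : (Mr)ˣ) : Mr) * (g : Mr) = 1 := by
  rw [← Units.val_mul, inv_mul_cancel, Units.val_one]

lemma symp_inv {g : (M2)ˣ} (hg : Symp (g : M2)) : Symp ((g⁻¹ : (M2)ˣ) : M2) := by
  unfold Symp at *
  set gi : M2 := ((g⁻¹ : (M2)ˣ) : M2) with hgi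
  have h2 : (g : M2) * gi = 1 := by rw [hgi, ← Units.val_mul, mul_inv_cancel, Units.val_one]
  conv_lhs => rw [← hg]
  have h : giᵀ * ((g : M2)ᵀ * Jm * (g : M2)) * gi = ((g : M2) * gi)ᵀ * Jm * ((g : M2) * gi) := by
    rw [transpose_mul]; noncomm_ring
  rw [h, h2, transpose_one, one_mul, mul_one]

/-- Levi units -/
def mU (X : (Mr)ˣ) : (M2)ˣ where
  val := fromBlocks X.val 0 0 (X.inv)ᵀ
  inv := fromBlocks X.inv 0 0 (X.val)ᵀ
  val_inv := by
    have := X.invertible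
    rw [fromBlocks_multiply, ← fromBlocks_one]
    simp [← transpose_mul]
  inv_val := by
    have := X.invertible
    rw [fromBlocks_multiply, ← fromBlocks_one]
    simp [← transpose_mul]

lemma symp_mU (X : (Mr)ˣ) : Symp ((mU X : (M2)ˣ) : M2) := by
  show (fromBlocks X.val 0 0 (X.inv)ᵀ)ᵀ * Jm * fromBlocks X.val 0 0 (X.inv)ᵀ = Jm
  have := X.invertible
  rw [fromBlocks_transpose, Jm, fromBlocks_multiply, fromBlocks_multiply]
  simp [← transpose_mul]

/-- unipotent upper-triangular units -/
def uU (S : Mr) : (M2)ˣ where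
  val := fromBlocks 1 S 0 1
  inv := fromBlocks 1 (-S) 0 1
  val_inv := by rw [fromBlocks_multiply]; simp [fromBlocks_one]
  inv_val := by rw [fromBlocks_multiply]; simp [fromBlocks_one]

lemma symp_uU {S : Mr} (hS : Sᵀ = S) : Symp ((uU S : (M2)ˣ) : M2) := by
  show (fromBlocks 1 S 0 1)ᵀ * Jm * fromBlocks 1 S 0 1 = Jm
  rw [fromBlocks_transpose, Jm, fromBlocks_multiply, fromBlocks_multiply]
  simp [hS]


/-- the rank-one matrix E₀₀ -/
def e00 : Mr := vecMulVec (Pi.single (0:Fin r) (1:F)) (Pi.single (0:Fin r) (1:F))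

lemma e00_sq : (e00 : Mr) * e00 = e00 := by
  ext a b
  rw [e00, outer_single_mul]
  simp [vecMulVec_apply, Pi.single_apply]

lemma e00_transpose : (e00 : Mr)ᵀ = e00 := by
  ext a b
  simp [e00, transpose_apply, vecMulVec_apply, Pi.single_apply, mul_comm]

/-- the Weyl element w₁ as a unit -/
def wU : (M2)ˣ where
  val := fromBlocks (1 - e00) (-e00) e00 (1 - e00)
  inv := fromBlocks (1 - e00) e00 (-e00) (1 - e00)
  val_inv := by
    rw [fromBlocks_multiply, ← fromBlocks_one, fromBlocks_inj]
    refine ⟨?_, ?_, ?_, ?_⟩ <;>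
      simp only [mul_sub, sub_mul, mul_neg, neg_mul, neg_neg, mul_one, one_mul, e00_sq,
        neg_sub] <;>
      abel
  inv_val := by
    rw [fromBlocks_multiply, ← fromBlocks_one, fromBlocks_inj]
    refine ⟨?_, ?_, ?_, ?_⟩ <;>
      simp only [mul_sub, sub_mul, mul_neg, neg_mul, neg_neg, mul_one, one_mul, e00_sq,
        neg_sub] <;>
      abel

lemma wU_mul_Jm : ((wU : (M2)ˣ) : M2) * Jm = Jm * ((wU : (M2)ˣ) : M2) := by
  show fromBlocks (1 - e00) (-e00) e00 (1 - e00) * fromBlocks 0 (-1) 1 0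
    = fromBlocks 0 (-1) 1 0 * fromBlocks (1 - e00) (-e00) e00 (1 - e00)
  rw [fromBlocks_multiply, fromBlocks_multiply, fromBlocks_inj]
  refine ⟨?_, ?_, ?_, ?_⟩ <;> simp

lemma wU_transpose : (((wU : (M2)ˣ) : M2))ᵀ = ((wU⁻¹ : (M2)ˣ) : M2) := by
  show (fromBlocks (1 - e00) (-e00) e00 (1 - e00))ᵀ = fromBlocks (1 - e00) e00 (-e00) (1 - e00)
  rw [fromBlocks_transpose, transpose_neg, e00_transpose, transpose_sub, transpose_one,
    e00_transpose]

lemma symp_wU : Symp ((wU : (M2)ˣ) : M2) := by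
  unfold Symp
  rw [wU_transpose, mul_assoc, ← wU_mul_Jm, ← mul_assoc, ← Units.val_mul, inv_mul_cancel,
    Units.val_one, one_mul]


lemma vecMulVec_T (u v : Fin r → F) : (vecMulVec u v)ᵀ = vecMulVec v u := by
  ext a b; simp [vecMulVec_apply, mul_comm]

/-- transpose of a unit -/
def tU (E : (Mr)ˣ) : (Mr)ˣ where
  val := E.valᵀ
  inv := E.invᵀ
  val_inv := by rw [← transpose_mul, E.inv_val, transpose_one]
  inv_val := by rw [← transpose_mul, E.val_inv, transpose_one]

/-- the Levi unit whose lower-right block is a given unit -/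
def mDU (E : (Mr)ˣ) : (M2)ˣ := mU (tU E)⁻¹

lemma mDU_val (E : (Mr)ˣ) : ((mDU E : (M2)ˣ) : M2) = fromBlocks ((E.inv)ᵀ) 0 0 E.val := by
  show fromBlocks ((tU E)⁻¹).val 0 0 (((tU E)⁻¹).inv)ᵀ = _
  rw [show ((tU E)⁻¹).val = E.invᵀ from rfl, show ((tU E)⁻¹).inv = E.valᵀ from rfl,
    transpose_transpose]

/-- zeroing out the first row of a matrix whose first row and column are `e₀`
strictly decreases the rank -/
lemma rank_lt_of_zero_row (C₁ C₃ : Mr)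
    (hrow : ∀ b, C₁ 0 b = if b = 0 then 1 else 0)
    (hcol : ∀ a, C₁ a 0 = if a = 0 then 1 else 0)
    (hC₃ : ∀ a b, C₃ a b = if a = 0 then 0 else C₁ a b) :
    C₃.rank < C₁.rank := by
  rw [Matrix.rank_eq_finrank_span_cols, Matrix.rank_eq_finrank_span_cols]
  apply Submodule.finrank_lt_finrank_of_lt
  have hle : Submodule.span F (Set.range C₃ᵀ) ≤ Submodule.span F (Set.range C₁ᵀ) := by
    rw [Submodule.span_le]
    rintro _ ⟨b, rfl⟩
    by_cases hb : b = 0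
    · have : C₃ᵀ b = 0 := by
        ext a
        rw [transpose_apply, hC₃]
        by_cases ha : a = 0 <;> simp [ha, hb, hcol]
      rw [this]
      exact Submodule.zero_mem _
    · have : C₃ᵀ b = C₁ᵀ b := by
        ext a
        rw [transpose_apply, transpose_apply, hC₃]
        by_cases ha : a = 0 <;> simp [ha, hb, hrow]
      rw [this]
      exact Submodule.subset_span ⟨b, rfl⟩
  refine lt_of_le_of_ne hle ?_
  intro heq
  have h1 : C₁ᵀ 0 ∈ Submodule.span F (Set.range C₃ᵀ) := by
    rw [show Submodule.span F (Set.range C₃ᵀ) = Submodule.span F (Set.range C₁ᵀ) from heq]; exact Submodule.subset_span ⟨0, rfl⟩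
  have h2 : ∀ v ∈ Submodule.span F (Set.range C₃ᵀ), v 0 = 0 := by
    intro v hv
    have hker : Submodule.span F (Set.range C₃ᵀ) ≤ LinearMap.ker (LinearMap.proj (0 : Fin r)
        (R := F) (φ := fun _ : Fin r => F)) := by
      rw [Submodule.span_le]
      rintro _ ⟨b, rfl⟩
      simp only [SetLike.mem_coe, LinearMap.mem_ker, LinearMap.proj_apply]
      rw [transpose_apply, hC₃]
      simp
    simpa using hker hv
  have h3 := h2 _ h1
  rw [transpose_apply, hcol] at h3
  simp at h3

theorem main_aux (G : Set ((M2)ˣ))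
    (hPG : ∀ p : (M2)ˣ, Symp (p : M2) →
      (∀ i j, (p : M2) (Sum.inr i) (Sum.inl j) = 0) → p ∈ G)
    (hwG : (wU : (M2)ˣ) ∈ G) :
    ∀ (n : ℕ) (g : (M2)ˣ), Symp (g : M2) → ((g : M2).toBlocks₂₁).rank = n →
      g ∈ Subgroup.closure G := by
  intro n
  induction n using Nat.strong_induction_on with
  | _ n IH =>
    intro g hg hr
    by_cases hC : (g : M2).toBlocks₂₁ = 0
    · exact Subgroup.subset_closure (hPG g hg (fun i j => congrFun (congrFun hC i) j))
    -- nontrivial lower-left block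
    set A : Mr := (g : M2).toBlocks₁₁ with hA
    set B : Mr := (g : M2).toBlocks₁₂ with hB
    set C : Mr := (g : M2).toBlocks₂₁ with hCdef
    set D : Mr := (g : M2).toBlocks₂₂ with hD
    have hgb : (g : M2) = fromBlocks A B C D := (fromBlocks_toBlocks _).symm
    obtain ⟨E, Fm, hrow, hcol⟩ := exists_normalize C hC
    set g₁ : (M2)ˣ := mDU E * g * mU Fm with hg₁
    set A₁ : Mr := (E.inv)ᵀ * A * Fm.val with hA₁
    set B₁ : Mr := (E.inv)ᵀ * B * (Fm.inv)ᵀ with hB₁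
    set C₁ : Mr := E.val * C * Fm.val with hC₁
    set D₁ : Mr := E.val * D * (Fm.inv)ᵀ with hD₁
    have hprod : (g₁ : M2) = fromBlocks A₁ B₁ C₁ D₁ := by
      show ((mDU E : (M2)ˣ) : M2) * (g : M2) * ((mU Fm : (M2)ˣ) : M2) = _
      rw [mDU_val, hgb, show ((mU Fm : (M2)ˣ) : M2) = fromBlocks Fm.val 0 0 (Fm.inv)ᵀ from rfl,
        fromBlocks_multiply, fromBlocks_multiply, fromBlocks_inj, hA₁, hB₁, hC₁, hD₁]
      refine ⟨?_, ?_, ?_, ?_⟩ <;> noncomm_ring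
    have hrow' : ∀ b, C₁ 0 b = if b = 0 then 1 else 0 := hrow
    have hcol' : ∀ a, C₁ a 0 = if a = 0 then 1 else 0 := hcol
    have hsymp₁ : Symp (g₁ : M2) := by
      rw [hg₁, Units.val_mul, Units.val_mul]
      exact symp_mul (symp_mul (symp_mU ((tU E)⁻¹)) hg) (symp_mU Fm)
    -- the symmetry relation coming from the symplectic condition
    have hs2 : (fromBlocks A₁ B₁ C₁ D₁)ᵀ * Jm * fromBlocks A₁ B₁ C₁ D₁ = Jm := by
      rw [← hprod]; exact hsymp₁
    rw [Jm, fromBlocks_transpose, fromBlocks_multiply, fromBlocks_multiply, fromBlocks_inj] at hs2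
    obtain ⟨h11, -, -, -⟩ := hs2
    have hsub : C₁ᵀ * A₁ - A₁ᵀ * C₁ = 0 := by rw [← h11]; noncomm_ring
    have hsym : C₁ᵀ * A₁ = A₁ᵀ * C₁ := sub_eq_zero.mp hsub
    have hrel : ∀ b, A₁ 0 b = ∑ m, A₁ m 0 * C₁ m b := by
      intro b
      have h := congrFun (congrFun hsym 0) b
      rw [mul_apply, mul_apply] at h
      have hL : ∑ m, C₁ᵀ 0 m * A₁ m b = A₁ 0 b := by
        rw [Finset.sum_congr rfl (fun m _ => by rw [transpose_apply, hcol' m])]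
        simp
      have hR : ∑ m, A₁ᵀ 0 m * C₁ m b = ∑ m, A₁ m 0 * C₁ m b :=
        Finset.sum_congr rfl (fun m _ => by rw [transpose_apply])
      rw [hL, hR] at h
      exact h
    -- the symmetric matrix S clearing the first row of A₁
    set S : Mr := (A₁ 0 0) • e00 - (vecMulVec (fun k => A₁ k 0) (Pi.single (0 : Fin r) (1 : F))
      + vecMulVec (Pi.single (0 : Fin r) (1 : F)) (fun k => A₁ k 0)) with hS
    have hST : Sᵀ = S := by
      rw [hS, transpose_sub, transpose_smul, e00_transpose, transpose_add, vecMulVec_T,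
        vecMulVec_T, add_comm]
    have hSrow : ∀ b, S 0 b = -(A₁ b 0) := by
      intro b
      rw [hS]
      simp only [Matrix.sub_apply, Matrix.smul_apply, Matrix.add_apply, vecMulVec_apply,
        e00, Pi.single_apply, smul_eq_mul]
      simp
    set g₂ : (M2)ˣ := uU S * g₁ with hg₂
    set A₂ : Mr := A₁ + S * C₁ with hA₂
    have hprod₂ : (g₂ : M2) = fromBlocks A₂ (B₁ + S * D₁) C₁ D₁ := by
      show (fromBlocks 1 S 0 1) * (g₁ : M2) = _
      rw [hprod, fromBlocks_multiply, fromBlocks_inj, hA₂]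
      refine ⟨?_, ?_, ?_, ?_⟩ <;> noncomm_ring
    have hA₂row : ∀ b, A₂ 0 b = 0 := by
      intro b
      rw [hA₂, Matrix.add_apply, mul_apply,
        Finset.sum_congr rfl (fun m _ => by rw [hSrow m, neg_mul])]
      rw [Finset.sum_neg_distrib, ← hrel b]
      exact add_neg_cancel _
    -- multiply by w₁⁻¹, killing the first row of the lower-left block
    set g₃ : (M2)ˣ := wU⁻¹ * g₂ with hg₃
    set C₃ : Mr := Matrix.of fun a b => if a = 0 then (0 : F) else C₁ a b with hC₃
    have hblock₃ : (g₃ : M2).toBlocks₂₁ = C₃ := by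
      have hval : (g₃ : M2) = fromBlocks (1 - e00) e00 (-e00) (1 - e00) * (g₂ : M2) := rfl
      rw [hval, hprod₂, fromBlocks_multiply, toBlocks_fromBlocks₂₁, hC₃]
      ext a b
      rw [Matrix.add_apply, Matrix.of_apply, Matrix.neg_mul, Matrix.neg_apply, e00,
        outer_single_mul, sub_mul, one_mul, Matrix.sub_apply, outer_single_mul, hA₂row b,
        mul_zero, neg_zero, zero_add]
      by_cases ha : a = 0
      · simp [ha, Pi.single_apply]
      · simp [ha, Pi.single_apply]
    have hsymp₃ : Symp (g₃ : M2) := by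
      rw [hg₃, Units.val_mul]
      exact symp_mul (symp_inv symp_wU) (by
        rw [hg₂, Units.val_mul]
        exact symp_mul (symp_uU hST) hsymp₁)
    -- rank decreases
    have hrankC₁ : C₁.rank = n := by
      rw [hC₁, Matrix.rank_mul_eq_left_of_isUnit_det _ _
        ((Matrix.isUnit_iff_isUnit_det _).mp Fm.isUnit),
        Matrix.rank_mul_eq_right_of_isUnit_det _ _
        ((Matrix.isUnit_iff_isUnit_det _).mp E.isUnit)]
      exact hr
    have hlt : ((g₃ : M2).toBlocks₂₁).rank < n := by
      rw [hblock₃, ← hrankC₁]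
      exact rank_lt_of_zero_row C₁ C₃ hrow' hcol' (fun a b => by rw [hC₃]; rfl)
    have hmem₃ : g₃ ∈ Subgroup.closure G := IH _ hlt g₃ hsymp₃ rfl
    -- reassemble
    have hmemP : ∀ X : (Mr)ˣ, mU X ∈ Subgroup.closure G := by
      intro X
      refine Subgroup.subset_closure (hPG _ (symp_mU X) ?_)
      intro i j
      show (fromBlocks X.val 0 0 (X.inv)ᵀ) (Sum.inr i) (Sum.inl j) = 0
      rw [fromBlocks_apply₂₁]
      rfl
    have hmemU : uU S ∈ Subgroup.closure G := by
      refine Subgroup.subset_closure (hPG _ (symp_uU hST) ?_)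
      intro i j
      show (fromBlocks 1 S 0 1) (Sum.inr i) (Sum.inl j) = 0
      rw [fromBlocks_apply₂₁]
      rfl
    have hmemW : (wU : (M2)ˣ) ∈ Subgroup.closure G := Subgroup.subset_closure hwG
    have hgeq : g = (mDU E)⁻¹ * ((uU S)⁻¹ * (wU * g₃)) * (mU Fm)⁻¹ := by
      rw [hg₃, hg₂, hg₁]
      group
    rw [hgeq]
    exact mul_mem (mul_mem (inv_mem (hmemP _)) (mul_mem (inv_mem hmemU)
      (mul_mem hmemW hmem₃))) (inv_mem (hmemP _))

end T
open T in
/-- `Sp_{2r}(F)` (for `F` of characteristic 0, `r ≥ 1`) is generated by the Siegel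
parabolic subgroup `P(F)` (block upper triangular symplectic matrices) together with the
element `w₁`, the image of `[[0,-1],[1,0]]` under the standard embedding
`SL₂ ↪ Sp_{2r}` into the first coordinate. -/
theorem symplectic_generated_by_parabolic_and_w1
    (F : Type*) [Field F] [CharZero F] (r : ℕ) [NeZero r] :
    ∀ (J : Matrix (Fin r ⊕ Fin r) (Fin r ⊕ Fin r) F),
    J = Matrix.fromBlocks 0 (-1) 1 0 →
    ∀ (w₁ : Matrix (Fin r ⊕ Fin r) (Fin r ⊕ Fin r) F),
    (w₁ = fun p q =>
      match p, q with
      | Sum.inl i, Sum.inl j => if i = 0 then 0 else if i = j then 1 else 0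
      | Sum.inl i, Sum.inr j => if i = 0 ∧ j = 0 then -1 else 0
      | Sum.inr i, Sum.inl j => if i = 0 ∧ j = 0 then 1 else 0
      | Sum.inr i, Sum.inr j => if i = 0 then 0 else if i = j then 1 else 0) →
    ∀ g : (Matrix (Fin r ⊕ Fin r) (Fin r ⊕ Fin r) F)ˣ,
      (g : Matrix (Fin r ⊕ Fin r) (Fin r ⊕ Fin r) F)ᵀ * J * g = J →
      g ∈ Subgroup.closure
        ({p : (Matrix (Fin r ⊕ Fin r) (Fin r ⊕ Fin r) F)ˣ |
            (p : Matrix (Fin r ⊕ Fin r) (Fin r ⊕ Fin r) F)ᵀ * J * p = J ∧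
            ∀ i j, (p : Matrix (Fin r ⊕ Fin r) (Fin r ⊕ Fin r) F) (Sum.inr i) (Sum.inl j) = 0} ∪
          {p : (Matrix (Fin r ⊕ Fin r) (Fin r ⊕ Fin r) F)ˣ |
            (p : Matrix (Fin r ⊕ Fin r) (Fin r ⊕ Fin r) F) = w₁}) := by
  intro J hJ w₁ hw₁ g hg
  subst hJ
  subst hw₁
  have hwval : ((T.wU : (Matrix (Fin r ⊕ Fin r) (Fin r ⊕ Fin r) F)ˣ) :
      Matrix (Fin r ⊕ Fin r) (Fin r ⊕ Fin r) F) = fun p q =>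
      match p, q with
      | Sum.inl i, Sum.inl j => if i = 0 then 0 else if i = j then 1 else 0
      | Sum.inl i, Sum.inr j => if i = 0 ∧ j = 0 then -1 else 0
      | Sum.inr i, Sum.inl j => if i = 0 ∧ j = 0 then 1 else 0
      | Sum.inr i, Sum.inr j => if i = 0 then 0 else if i = j then 1 else 0 := by
    show Matrix.fromBlocks (1 - T.e00) (-T.e00) T.e00 (1 - T.e00) = _
    ext p q
    rcases p with i | i <;> rcases q with j | j <;>
      simp only [Matrix.fromBlocks_apply₁₁, Matrix.fromBlocks_apply₁₂,
        Matrix.fromBlocks_apply₂₁, Matrix.fromBlocks_apply₂₂, Matrix.sub_apply,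
        Matrix.neg_apply, Matrix.one_apply, T.e00, Matrix.vecMulVec_apply, Pi.single_apply] <;>
      by_cases hi : i = 0 <;> by_cases hj : j = 0 <;> by_cases hij : i = j <;>
      simp_all
  refine T.main_aux _ ?_ ?_ (((g : Matrix (Fin r ⊕ Fin r) (Fin r ⊕ Fin r) F)).toBlocks₂₁).rank
    g hg rfl
  · intro p h1 h2
    exact Or.inl ⟨h1, h2⟩
  · exact Or.inr hwval
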